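/- The sum μ(S) = μ1(S) + μ2(S) of the two Haldane functions μ1(S) = 1.2 S/(0.1 + S + 10 S²) and μ2(S) = 1.5 S/(5 + S + 0.5 S²) possesses at least two distinct strict local maximum points in the open interval (0, 10). -/

import Mathlib

open Set Filter

noncomputable section

/-- The sum of the two Haldane functions
`μ1(S) = 1.2 S/(0.1 + S + 10 S²)` and `μ2(S) = 1.5 S/(5 + S + 0.5 S²)`. -/
def haldaneSum (S : ℝ) : ℝ :=
  1.2 * S / (0.1 + S + 10 * S ^ 2) + 1.5 * S / (5 + S + 0.5 * S ^ 2)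

/-- The sum `μ = μ1 + μ2` of the two Haldane functions possesses at least two distinct
strict local maximum points in the open interval `(0, 10)`: points `S̄` admitting a
neighborhood on which `μ(S) < μ(S̄)` for all `S ≠ S̄`. -/
def Pg (x : ℝ) : ℝ :=
  1230 + 1080*x - 110715*x^2 + 11988*x^3 + 270312*x^4 - 10800*x^5 - 31200*x^6

lemma d1_pos (x : ℝ) : (0:ℝ) < 0.1 + x + 10 * x ^ 2 := by
  nlinarith [sq_nonneg (x + 0.05)]

lemma d2_pos (x : ℝ) : (0:ℝ) < 5 + x + 0.5 * x ^ 2 := by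
  nlinarith [sq_nonneg (x + 1)]

lemma haldane_hasDeriv (x : ℝ) :
    HasDerivAt haldaneSum
      (Pg x / (400 * (0.1 + x + 10 * x ^ 2) ^ 2 * (5 + x + 0.5 * x ^ 2) ^ 2)) x := by
  have h1 := d1_pos x
  have h2 := d2_pos x
  have hden1 : HasDerivAt (fun S : ℝ => 0.1 + S + 10 * S ^ 2) (1 + 10 * (2 * x)) x := by
    have := (((hasDerivAt_id x).const_add (0.1:ℝ)).add (HasDerivAt.const_mul (10:ℝ) (hasDerivAt_pow 2 x)))
    simp at this; exact this
  have hden2 : HasDerivAt (fun S : ℝ => 5 + S + 0.5 * S ^ 2) (1 + 0.5 * (2 * x)) x := by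
    have := (((hasDerivAt_id x).const_add (5:ℝ)).add (HasDerivAt.const_mul (0.5:ℝ) (hasDerivAt_pow 2 x)))
    simp at this; exact this
  have hnum1 : HasDerivAt (fun S : ℝ => 1.2 * S) 1.2 x := by
    simpa using (hasDerivAt_id x).const_mul (1.2:ℝ)
  have hnum2 : HasDerivAt (fun S : ℝ => 1.5 * S) 1.5 x := by
    simpa using (hasDerivAt_id x).const_mul (1.5:ℝ)
  have H1 := hnum1.div hden1 h1.ne'
  have H2 := hnum2.div hden2 h2.ne'
  have H := H1.add H2
  refine H.congr_deriv ?_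
  unfold Pg
  rw [div_add_div _ _ (pow_ne_zero 2 h1.ne') (pow_ne_zero 2 h2.ne'), div_eq_div_iff (mul_ne_zero (pow_ne_zero 2 h1.ne') (pow_ne_zero 2 h2.ne')) (mul_ne_zero (mul_ne_zero (by norm_num) (pow_ne_zero 2 h1.ne')) (pow_ne_zero 2 h2.ne'))]
  ring

lemma Pg'_hasDeriv (x : ℝ) :
    HasDerivAt Pg
      (1080 - 221430*x + 35964*x^2 + 1081248*x^3 - 54000*x^4 - 187200*x^5) x := by
  have h := (((((((hasDerivAt_const x (1230:ℝ)).add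
      (HasDerivAt.const_mul (1080:ℝ) (hasDerivAt_id x))).sub
      (HasDerivAt.const_mul (110715:ℝ) (hasDerivAt_pow 2 x))).add
      (HasDerivAt.const_mul (11988:ℝ) (hasDerivAt_pow 3 x))).add
      (HasDerivAt.const_mul (270312:ℝ) (hasDerivAt_pow 4 x))).sub
      (HasDerivAt.const_mul (10800:ℝ) (hasDerivAt_pow 5 x))).sub
      (HasDerivAt.const_mul (31200:ℝ) (hasDerivAt_pow 6 x)))
  simp only [id_eq] at h
  unfold Pg
  refine h.congr_deriv ?_
  push_cast
  ring

lemma key (a b : ℝ) (hab : a < b) (hPa : 0 < Pg a) (hPb : Pg b < 0)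
    (hP' : ∀ x ∈ Icc a b,
      1080 - 221430*x + 35964*x^2 + 1081248*x^3 - 54000*x^4 - 187200*x^5 < 0) :
    ∃ c ∈ Ioo a b, ∀ x ∈ Ioo a b, x ≠ c → haldaneSum x < haldaneSum c := by
  have hPcont : Continuous Pg := by
    unfold Pg; continuity
  have hanti : StrictAntiOn Pg (Icc a b) := by
    apply strictAntiOn_of_deriv_neg (convex_Icc a b) hPcont.continuousOn
    intro x hx
    rw [interior_Icc] at hx
    rw [(Pg'_hasDeriv x).deriv]
    exact hP' x (Ioo_subset_Icc_self hx)
  obtain ⟨c, hc, hPc⟩ : ∃ c ∈ Ioo a b, Pg c = 0 := by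
    have h0 : (0:ℝ) ∈ Ioo (Pg b) (Pg a) := ⟨hPb, hPa⟩
    have h := intermediate_value_Ioo' hab.le hPcont.continuousOn h0
    obtain ⟨c, hc1, hc2⟩ := h
    exact ⟨c, hc1, hc2⟩
  have hfc : Continuous haldaneSum := by
    have hd : Differentiable ℝ haldaneSum := fun x => (haldane_hasDeriv x).differentiableAt
    exact hd.continuous
  have hderivpos : ∀ x ∈ Ioo a c, 0 < deriv haldaneSum x := by
    intro x hx
    rw [(haldane_hasDeriv x).deriv]
    have hPx : 0 < Pg x := by
      have := hanti ⟨hx.1.le, (hx.2.trans hc.2).le⟩ ⟨hc.1.le, hc.2.le⟩ hx.2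
      rw [hPc] at this; exact this
    exact div_pos hPx (mul_pos (mul_pos (by norm_num) (pow_pos (d1_pos x) 2)) (pow_pos (d2_pos x) 2))
  have hderivneg : ∀ x ∈ Ioo c b, deriv haldaneSum x < 0 := by
    intro x hx
    rw [(haldane_hasDeriv x).deriv]
    have hPx : Pg x < 0 := by
      have := hanti ⟨hc.1.le, hc.2.le⟩ ⟨(hc.1.trans hx.1).le, hx.2.le⟩ hx.1
      rw [hPc] at this; exact this
    exact div_neg_of_neg_of_pos hPx (mul_pos (mul_pos (by norm_num) (pow_pos (d1_pos x) 2)) (pow_pos (d2_pos x) 2))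
  have hmono : StrictMonoOn haldaneSum (Icc a c) := by
    apply strictMonoOn_of_deriv_pos (convex_Icc a c) hfc.continuousOn
    intro x hx; rw [interior_Icc] at hx; exact hderivpos x hx
  have hantif : StrictAntiOn haldaneSum (Icc c b) := by
    apply strictAntiOn_of_deriv_neg (convex_Icc c b) hfc.continuousOn
    intro x hx; rw [interior_Icc] at hx; exact hderivneg x hx
  refine ⟨c, hc, fun x hx hne => ?_⟩
  rcases lt_or_gt_of_ne hne with h | h
  · exact hmono ⟨hx.1.le, h.le⟩ ⟨hc.1.le, le_refl c⟩ h
  · exact hantif ⟨le_refl c, hc.2.le⟩ ⟨h.le, hx.2.le⟩ h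

theorem stmt2 :
    ∃ S1 S2 : ℝ, S1 ∈ Ioo (0:ℝ) 10 ∧ S2 ∈ Ioo (0:ℝ) 10 ∧ S1 ≠ S2 ∧
      (∃ U ∈ nhds S1, ∀ x ∈ U, x ≠ S1 → haldaneSum x < haldaneSum S1) ∧
      (∃ U ∈ nhds S2, ∀ x ∈ U, x ≠ S2 → haldaneSum x < haldaneSum S2) := by
  obtain ⟨c1, hc1, hm1⟩ := key 0.1 0.13 (by norm_num) (by unfold Pg; norm_num)
    (by unfold Pg; norm_num)
    (by
      intro x hx
      obtain ⟨h1, h2⟩ := hx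
      have hx0 : (0:ℝ) ≤ x := by linarith
      nlinarith [mul_nonneg (sub_nonneg.2 h1) (sub_nonneg.2 h2),
        mul_nonneg (sub_nonneg.2 h2) hx0,
        mul_nonneg (mul_nonneg (sub_nonneg.2 h2) hx0) hx0,
        mul_nonneg (mul_nonneg (mul_nonneg (sub_nonneg.2 h2) hx0) hx0) hx0,
        mul_nonneg (mul_nonneg (mul_nonneg (mul_nonneg (sub_nonneg.2 h2) hx0) hx0) hx0) hx0,
        mul_nonneg (mul_nonneg (sub_nonneg.2 h1) hx0) hx0])
  obtain ⟨c2, hc2, hm2⟩ := key 2.6 2.8 (by norm_num) (by unfold Pg; norm_num)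
    (by unfold Pg; norm_num)
    (by
      intro x hx
      obtain ⟨h1, h2⟩ := hx
      have hx0 : (0:ℝ) ≤ x := by linarith
      nlinarith [mul_nonneg (sub_nonneg.2 h1) (sub_nonneg.2 h2),
        mul_nonneg (sub_nonneg.2 h2) hx0,
        mul_nonneg (mul_nonneg (sub_nonneg.2 h2) hx0) hx0,
        mul_nonneg (mul_nonneg (mul_nonneg (sub_nonneg.2 h2) hx0) hx0) hx0,
        mul_nonneg (mul_nonneg (mul_nonneg (mul_nonneg (sub_nonneg.2 h2) hx0) hx0) hx0) hx0,
        mul_nonneg (mul_nonneg (mul_nonneg (sub_nonneg.2 h1) hx0) hx0) hx0,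
        mul_nonneg (mul_nonneg (sub_nonneg.2 h1) hx0) hx0])
  refine ⟨c1, c2, ⟨by linarith [hc1.1], by linarith [hc1.2]⟩,
    ⟨by linarith [hc2.1], by linarith [hc2.2]⟩, by linarith [hc1.2, hc2.1],
    ⟨Ioo 0.1 0.13, isOpen_Ioo.mem_nhds hc1, hm1⟩,
    ⟨Ioo 2.6 2.8, isOpen_Ioo.mem_nhds hc2, hm2⟩⟩
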